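/- Let E be a real normed vector space, F ⊆ E a closed linear subspace, and X, Y : E → E Fréchet-differentiable maps that both leave F invariant (X(v) ∈ F and Y(v) ∈ F for all v ∈ F). Then the commutator [X, Y] also leaves F invariant: [X, Y](v) ∈ F for all v ∈ F. -/

import Mathlib

/-- Directional derivative of an `F`-preserving map, at a point of `F` in a direction
in `F`, lies in `F` (when `F` is closed). -/
lemma fderiv_mem_of_preserves
    {E : Type*} [NormedAddCommGroup E] [NormedSpace ℝ E]
    (F : Submodule ℝ E) (hF : IsClosed (F : Set E))
    (X : E → E) (hX : Differentiable ℝ X) (hXF : ∀ v ∈ F, X v ∈ F)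
    {v w : E} (hv : v ∈ F) (hw : w ∈ F) : fderiv ℝ X v w ∈ F := by
  set g : ℝ → E := fun t => X (v + t • w) with hg
  have hcurve : HasDerivAt (fun t : ℝ => v + t • w) w 0 := by
    simpa using (hasDerivAt_id (0:ℝ)).smul_const w |>.const_add v
  have hgd : HasDerivAt g (fderiv ℝ X v w) 0 := by
    have := (hX (v + (0:ℝ) • w)).hasFDerivAt.comp_hasDerivAt 0 hcurve
    simpa [hg, Function.comp_def] using this
  have htend := hasDerivAt_iff_tendsto_slope.mp hgd
  refine hF.mem_of_tendsto htend ?_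
  filter_upwards [self_mem_nhdsWithin] with t ht
  have : g t ∈ F := hXF _ (F.add_mem hv (F.smul_mem t hw))
  have hg0 : g 0 ∈ F := hXF _ (by simpa using hv)
  simpa [slope_def_field, slope, vsub_eq_sub] using F.smul_mem (t - 0)⁻¹ (F.sub_mem this hg0)

/-- If two differentiable vector fields `X, Y` leave a closed linear subspace `F`
invariant, so does their commutator `[X, Y](v) = DX(v)[Y(v)] - DY(v)[X(v)]`. -/
theorem commutator_preserves_subspace
    {E : Type*} [NormedAddCommGroup E] [NormedSpace ℝ E]
    (F : Submodule ℝ E) (hF : IsClosed (F : Set E))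
    (X Y : E → E) (hX : Differentiable ℝ X) (hY : Differentiable ℝ Y)
    (hXF : ∀ v ∈ F, X v ∈ F) (hYF : ∀ v ∈ F, Y v ∈ F) :
    ∀ v ∈ F, fderiv ℝ X v (Y v) - fderiv ℝ Y v (X v) ∈ F := by
  intro v hv
  exact F.sub_mem
    (fderiv_mem_of_preserves F hF X hX hXF hv (hYF v hv))
    (fderiv_mem_of_preserves F hF Y hY hYF hv (hXF v hv))
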